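/- Let v₁, …, v_n be distinct pairwise-adjacent vertices of a finite simple graph Γ, and let (e₁,…,e_n) and (e₁′,…,e_n′) be allowable tuples of linearly independent vectors in real inner product spaces E and E′ respectively. If ‖e_i‖ = ‖e_i′‖ for all i, and ⟨e_i, e_j⟩ = ⟨e_i′, e_j′⟩ for all pairs i ≠ j such that v_i and v_j are twist-related, then ⟨e_i, e_j⟩ = ⟨e_i′, e_j′⟩ for all i, j. (An allowable parallelotope metric is determined by its edge lengths and the angles between twist-related edges.) -/

import Mathlib

variable {V : Type*}

/-- The star of a vertex: the vertex together with its neighbors. -/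
def gstar (Γ : SimpleGraph V) (v : V) : Set V :=
  insert v (Γ.neighborSet v)

/-- Vertices `v` and `w` are twist-related if `st(v) ⊆ st(w)` or
`st(w) ⊆ st(v)`. -/
def TwistRelated (Γ : SimpleGraph V) (v w : V) : Prop :=
  gstar Γ v ⊆ gstar Γ w ∨ gstar Γ w ⊆ gstar Γ v

variable {E : Type*} [NormedAddCommGroup E] [InnerProductSpace ℝ E]

/-- `K_i`: the span of the vectors `e k` for which `k = i`, or `k ≠ i` and
`st(v i) ⊆ st(v k)`. -/
def Kspan (Γ : SimpleGraph V) {n : ℕ} (v : Fin n → V) (e : Fin n → E)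
    (i : Fin n) : Submodule ℝ E :=
  Submodule.span ℝ (e '' {k | k = i ∨ (k ≠ i ∧ gstar Γ (v i) ⊆ gstar Γ (v k))})

/-- The tuple `e` is allowable if for all `i`, `j` with `v i`, `v j` not
twist-related, the subspaces `K_i ∩ L_ij^⊥` and `K_j ∩ L_ij^⊥` are orthogonal,
where `L_ij = K_i ∩ K_j`. -/
def Allowable (Γ : SimpleGraph V) {n : ℕ} (v : Fin n → V) (e : Fin n → E) :
    Prop :=
  ∀ i j : Fin n, ¬ TwistRelated Γ (v i) (v j) →
    ∀ x ∈ Kspan Γ v e i ⊓ (Kspan Γ v e i ⊓ Kspan Γ v e j)ᗮ,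
      ∀ y ∈ Kspan Γ v e j ⊓ (Kspan Γ v e i ⊓ Kspan Γ v e j)ᗮ,
        (inner ℝ x y : ℝ) = 0

/-- An allowable parallelotope metric is determined by its edge lengths and the
angles between twist-related edges: if two allowable tuples of linearly
independent vectors (spanning parallelotopes with edges indexed by the distinct
pairwise-adjacent vertices `v 1, …, v n`) have the same edge lengths and the
same inner products on twist-related pairs, then all their inner products
agree. -/

private lemma mem_orthogonal_span' {F : Type*} [NormedAddCommGroup F] [InnerProductSpace ℝ F]
    {S : Set F} {x : F} (h : ∀ u ∈ S, (inner ℝ u x : ℝ) = 0) :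
    x ∈ (Submodule.span ℝ S)ᗮ := by
  have ho : Submodule.span ℝ ({x} : Set F) ⟂ Submodule.span ℝ S := by
    rw [Submodule.isOrtho_span]
    rintro u hu w hw
    rw [Set.mem_singleton_iff] at hu
    subst hu
    rw [real_inner_comm]
    exact h w hw
  exact ho.le (Submodule.mem_span_singleton_self x)

private lemma span_image_inter' {n : ℕ} {F : Type*} [AddCommGroup F] [Module ℝ F]
    {e : Fin n → F} (he : LinearIndependent ℝ e) (A B : Set (Fin n)) :
    Submodule.span ℝ (e '' A) ⊓ Submodule.span ℝ (e '' B)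
      = Submodule.span ℝ (e '' (A ∩ B)) := by
  apply le_antisymm
  · rintro x hx
    rw [Submodule.mem_inf] at hx
    obtain ⟨hxA, hxB⟩ := hx
    rw [Finsupp.mem_span_image_iff_linearCombination] at hxA hxB ⊢
    obtain ⟨l, hl, rfl⟩ := hxA
    obtain ⟨l', hl', hll'⟩ := hxB
    have he2 : l' = l := he hll'
    subst he2
    refine ⟨l', (Finsupp.mem_supported ℝ l').2 fun k hk => ⟨(Finsupp.mem_supported ℝ l').1 hl hk,
      (Finsupp.mem_supported ℝ l').1 hl' hk⟩, rfl⟩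
  · exact le_inf (Submodule.span_mono (Set.image_mono Set.inter_subset_left))
      (Submodule.span_mono (Set.image_mono Set.inter_subset_right))

private lemma one_side' (Γ : SimpleGraph V) {n : ℕ} (v : Fin n → V)
    (e : Fin n → E) (hA : Allowable Γ v e) (i j : Fin n)
    (htwij : ¬ TwistRelated Γ (v i) (v j))
    [FiniteDimensional ℝ (Kspan Γ v e i ⊓ Kspan Γ v e j : Submodule ℝ E)]
    (p : E) (hp : p ∈ Kspan Γ v e i ⊓ Kspan Γ v e j)
    (hq : e i - p ∈ (Kspan Γ v e i ⊓ Kspan Γ v e j)ᗮ) :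
    (inner ℝ (e i) (e j) : ℝ) = inner ℝ p (e j) := by
  set L : Submodule ℝ E := Kspan Γ v e i ⊓ Kspan Γ v e j with hLdef
  set pj : E := ↑(Submodule.orthogonalProjection L (e j)) with hpjdef
  have hpjL : pj ∈ L := Submodule.coe_mem _
  have hqj : e j - pj ∈ Lᗮ := Submodule.sub_starProjection_mem_orthogonal (e j)
  have heiK : e i ∈ Kspan Γ v e i := Submodule.subset_span ⟨i, Or.inl rfl, rfl⟩
  have hejK : e j ∈ Kspan Γ v e j := Submodule.subset_span ⟨j, Or.inl rfl, rfl⟩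
  have h1 : (inner ℝ (e i - p) pj : ℝ) = 0 :=
    Submodule.inner_left_of_mem_orthogonal hpjL hq
  have h2 : (inner ℝ (e i - p) (e j - pj) : ℝ) = 0 := by
    refine hA i j htwij _ ⟨?_, hq⟩ _ ⟨?_, hqj⟩
    · exact Submodule.sub_mem _ heiK (inf_le_left (a := Kspan Γ v e i) (b := Kspan Γ v e j) hp)
    · exact Submodule.sub_mem _ hejK
        (inf_le_right (a := Kspan Γ v e i) (b := Kspan Γ v e j) hpjL)
  have h3 : (inner ℝ (e i - p) (e j) : ℝ) = 0 := by
    have h4 : e j = pj + (e j - pj) := by abel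
    rw [h4, inner_add_right, h1, h2, add_zero]
  rw [inner_sub_left] at h3
  linarith

private def Uset (Γ : SimpleGraph V) {n : ℕ} (v : Fin n → V) (i : Fin n) : Set (Fin n) :=
  {k | gstar Γ (v i) ⊆ gstar Γ (v k)}

private lemma mem_Uset {Γ : SimpleGraph V} {n : ℕ} {v : Fin n → V} {i k : Fin n} :
    k ∈ Uset Γ v i ↔ gstar Γ (v i) ⊆ gstar Γ (v k) := Iff.rfl

private lemma Kspan_eq (Γ : SimpleGraph V) {n : ℕ} (v : Fin n → V) (e : Fin n → E) (i : Fin n) :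
    Kspan Γ v e i = Submodule.span ℝ (e '' Uset Γ v i) := by
  unfold Kspan Uset
  congr 1
  ext k
  constructor
  · rintro ⟨m, hm, rfl⟩
    rcases hm with rfl | ⟨-, h⟩
    · refine ⟨m, ?_, rfl⟩
      simp only [Set.mem_setOf_eq]
      exact subset_rfl
    · exact ⟨m, h, rfl⟩
  · rintro ⟨m, hm, rfl⟩
    by_cases hk : m = i
    · exact ⟨m, Or.inl hk, rfl⟩
    · exact ⟨m, Or.inr ⟨hk, hm⟩, rfl⟩

theorem stmt_10 [Fintype V] (Γ : SimpleGraph V) {n : ℕ} (v : Fin n → V)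
    (hvinj : Function.Injective v)
    (hadj : ∀ i j : Fin n, i ≠ j → Γ.Adj (v i) (v j))
    {E' : Type*} [NormedAddCommGroup E'] [InnerProductSpace ℝ E']
    (e : Fin n → E) (e' : Fin n → E')
    (he : LinearIndependent ℝ e) (he' : LinearIndependent ℝ e')
    (hA : Allowable Γ v e) (hA' : Allowable Γ v e')
    (hnorm : ∀ i, ‖e i‖ = ‖e' i‖)
    (htw : ∀ i j : Fin n, i ≠ j → TwistRelated Γ (v i) (v j) →
      (inner ℝ (e i) (e j) : ℝ) = (inner ℝ (e' i) (e' j) : ℝ)) :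
    ∀ i j : Fin n, (inner ℝ (e i) (e j) : ℝ) = (inner ℝ (e' i) (e' j) : ℝ) := by
  classical
  have hsame : ∀ i, (inner ℝ (e i) (e i) : ℝ) = inner ℝ (e' i) (e' i) := by
    intro i
    rw [real_inner_self_eq_norm_sq, real_inner_self_eq_norm_sq, hnorm]
  suffices H : ∀ N : ℕ, ∀ i j : Fin n, (Uset Γ v i ∩ Uset Γ v j).ncard < N →
      (inner ℝ (e i) (e j) : ℝ) = inner ℝ (e' i) (e' j) by
    intro i j
    exact H ((Uset Γ v i ∩ Uset Γ v j).ncard + 1) i j (Nat.lt_succ_self _)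
  intro N
  induction N with
  | zero => exact fun i j h => absurd h (Nat.not_lt_zero _)
  | succ N IH =>
    intro i j hcard
    rcases eq_or_ne i j with rfl | hij
    · exact hsame i
    by_cases htwij : TwistRelated Γ (v i) (v j)
    · exact htw i j hij htwij
    set T : Set (Fin n) := Uset Γ v i ∩ Uset Γ v j with hTdef
    have hiT : i ∉ T := fun h => htwij (Or.inr h.2)
    have hjT : j ∉ T := fun h => htwij (Or.inl h.1)
    -- Gram matrix equality on all needed pairs
    have gram : ∀ k ∈ T, ∀ l : Fin n, (l ∈ T ∨ l = i ∨ l = j) →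
        (inner ℝ (e k) (e l) : ℝ) = inner ℝ (e' k) (e' l) := by
      intro k hk l hl
      rcases eq_or_ne k l with rfl | hkl
      · exact hsame k
      rcases hl with hlT | hl | hl
      · by_cases htkl : TwistRelated Γ (v k) (v l)
        · exact htw k l hkl htkl
        · refine IH k l ?_
          have hsub1 : Uset Γ v k ∩ Uset Γ v l ⊆ T := by
            rintro m ⟨hmk, hml⟩
            exact ⟨mem_Uset.2 ((mem_Uset.1 hk.1).trans (mem_Uset.1 hmk)),
              mem_Uset.2 ((mem_Uset.1 hk.2).trans (mem_Uset.1 hmk))⟩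
          have hkn : k ∉ Uset Γ v k ∩ Uset Γ v l := fun hm => htkl (Or.inr hm.2)
          have hss : Uset Γ v k ∩ Uset Γ v l ⊂ T :=
            (Set.ssubset_iff_of_subset hsub1).2 ⟨k, hk, hkn⟩
          have := Set.ncard_lt_ncard hss (Set.toFinite T)
          omega
      · rcases hl with ⟨⟩
        exact htw k i (fun h => hiT (h ▸ hk)) (Or.inr (mem_Uset.1 hk.1))
      · rcases hl with ⟨⟩
        exact htw k j (fun h => hjT (h ▸ hk)) (Or.inr (mem_Uset.1 hk.2))
    -- spans
    have hLsp : Kspan Γ v e i ⊓ Kspan Γ v e j = Submodule.span ℝ (e '' T) := by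
      rw [Kspan_eq, Kspan_eq, span_image_inter' he]
    have hLsp' : Kspan Γ v e' i ⊓ Kspan Γ v e' j = Submodule.span ℝ (e' '' T) := by
      rw [Kspan_eq, Kspan_eq, span_image_inter' he']
    haveI hFD : FiniteDimensional ℝ (Kspan Γ v e i ⊓ Kspan Γ v e j : Submodule ℝ E) := by
      rw [hLsp]
      exact FiniteDimensional.span_of_finite ℝ ((Set.toFinite T).image e)
    haveI hFD' : FiniteDimensional ℝ (Kspan Γ v e' i ⊓ Kspan Γ v e' j : Submodule ℝ E') := by
      rw [hLsp']
      exact FiniteDimensional.span_of_finite ℝ ((Set.toFinite T).image e')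
    set p : E := ↑(Submodule.orthogonalProjection (Kspan Γ v e i ⊓ Kspan Γ v e j) (e i)) with hpdef
    have hpL : p ∈ Kspan Γ v e i ⊓ Kspan Γ v e j := Submodule.coe_mem _
    have hqL : e i - p ∈ (Kspan Γ v e i ⊓ Kspan Γ v e j)ᗮ :=
      Submodule.sub_starProjection_mem_orthogonal (e i)
    have hpmem : p ∈ Submodule.span ℝ (e '' T) := hLsp ▸ hpL
    rw [Finsupp.mem_span_image_iff_linearCombination] at hpmem
    obtain ⟨c, hc, hcp⟩ := hpmem
    have hcsupp : ↑c.support ⊆ T := (Finsupp.mem_supported ℝ c).1 hc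
    set p' : E' := Finsupp.linearCombination ℝ e' c with hp'def
    have hpe : ∀ m : Fin n, (inner ℝ p (e m) : ℝ) = ∑ k ∈ c.support, c k * inner ℝ (e k) (e m) := by
      intro m
      rw [← hcp, Finsupp.linearCombination_apply, Finsupp.sum, sum_inner]
      exact Finset.sum_congr rfl fun k _ => real_inner_smul_left _ _ _
    have hpe' : ∀ m : Fin n,
        (inner ℝ p' (e' m) : ℝ) = ∑ k ∈ c.support, c k * inner ℝ (e' k) (e' m) := by
      intro m
      rw [hp'def, Finsupp.linearCombination_apply, Finsupp.sum, sum_inner]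
      exact Finset.sum_congr rfl fun k _ => real_inner_smul_left _ _ _
    have htrans : ∀ m : Fin n, (m ∈ T ∨ m = i ∨ m = j) →
        (inner ℝ p (e m) : ℝ) = inner ℝ p' (e' m) := by
      intro m hm
      rw [hpe, hpe']
      exact Finset.sum_congr rfl fun k hk => by rw [gram k (hcsupp hk) m hm]
    have hp'L : p' ∈ Kspan Γ v e' i ⊓ Kspan Γ v e' j := by
      rw [hLsp']
      exact (Finsupp.mem_span_image_iff_linearCombination ℝ).2 ⟨c, hc, rfl⟩
    have hq' : e' i - p' ∈ (Kspan Γ v e' i ⊓ Kspan Γ v e' j)ᗮ := by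
      rw [hLsp']
      apply mem_orthogonal_span'
      rintro u ⟨m, hm, rfl⟩
      have hem : e m ∈ Kspan Γ v e i ⊓ Kspan Γ v e j := by
        rw [hLsp]
        exact Submodule.subset_span ⟨m, hm, rfl⟩
      have h0 : (inner ℝ (e i - p) (e m) : ℝ) = 0 :=
        Submodule.inner_left_of_mem_orthogonal hem hqL
      have hei : (inner ℝ (e' i) (e' m) : ℝ) = inner ℝ (e i) (e m) := by
        rw [real_inner_comm (e' m) (e' i), real_inner_comm (e m) (e i)]
        exact (gram m hm i (Or.inr (Or.inl rfl))).symm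
      rw [real_inner_comm, inner_sub_left, hei, ← htrans m (Or.inl hm)]
      rw [inner_sub_left] at h0
      linarith
    calc (inner ℝ (e i) (e j) : ℝ) = inner ℝ p (e j) :=
          one_side' Γ v e hA i j htwij p hpL hqL
      _ = inner ℝ p' (e' j) := htrans j (Or.inr (Or.inr rfl))
      _ = inner ℝ (e' i) (e' j) := (one_side' Γ v e' hA' i j htwij p' hp'L hq').symm
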